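/- On R^4 with the Poisson brackets of A_{4,12} (P and P' as given: P^{13}=-p14 e^{x3} sin x4, P^{14}=p14 e^{x3} cos x4, P^{23}=-p14 e^{x3} cos x4, P^{24}=-p14 e^{x3} sin x4; P'^{13}=e^{x3}(-α cos x4+β sin x4), P'^{14}=-e^{x3}(β cos x4+α sin x4), P'^{23}=e^{x3}(β cos x4+α sin x4), P'^{24}=e^{x3}(-α cos x4+β sin x4), with α=a54 x3-a64 x4, β=a64 x3+a54 x4), assume p14 ≠ 0. Then H1 = (-2 a64 x3 - 2 a54 x4)/p14 and H2 = ((a64^2 - a54^2) x3^2 + 4 a54 a64 x3 x4 + (a54^2 - a64^2) x4^2)/p14^2 satisfy {H1,H2} = 0 and {H1,H2}' = 0. -/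

import Mathlib

open scoped BigOperators

noncomputable def pd {m : ℕ} (μ : Fin m) (f : (Fin m → ℝ) → ℝ) (x : Fin m → ℝ) : ℝ :=
  fderiv ℝ f x (Pi.single μ 1)

/-- Poisson bracket associated to a bivector field `P`. -/
noncomputable def pbrk {m : ℕ} (P : (Fin m → ℝ) → Fin m → Fin m → ℝ)
    (f g : (Fin m → ℝ) → ℝ) (x : Fin m → ℝ) : ℝ :=
  ∑ μ, ∑ ν, P x μ ν * pd μ f x * pd ν g x

/-- Schouten bracket `[P,P]^{λμν}`. -/
noncomputable def schouten {m : ℕ} (P : (Fin m → ℝ) → Fin m → Fin m → ℝ)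
    (l μ ν : Fin m) (x : Fin m → ℝ) : ℝ :=
  ∑ ρ, (P x ρ l * pd ρ (fun y => P y μ ν) x
      + P x ρ ν * pd ρ (fun y => P y l μ) x
      + P x ρ μ * pd ρ (fun y => P y ν l) x)

/-- Mixed Schouten bracket `[P,Q]^{λμν}`. -/
noncomputable def schoutenMixed {m : ℕ} (P Q : (Fin m → ℝ) → Fin m → Fin m → ℝ)
    (l μ ν : Fin m) (x : Fin m → ℝ) : ℝ :=
  ∑ ρ, (P x ρ l * pd ρ (fun y => Q y μ ν) x + Q x ρ l * pd ρ (fun y => P y μ ν) x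
      + P x ρ ν * pd ρ (fun y => Q y l μ) x + Q x ρ ν * pd ρ (fun y => P y l μ) x
      + P x ρ μ * pd ρ (fun y => Q y ν l) x + Q x ρ μ * pd ρ (fun y => P y ν l) x)

/-- The Poisson bivector `P` on the group `A_{4,12}`. -/
noncomputable def P412 (p14 : ℝ) : (Fin 4 → ℝ) → Fin 4 → Fin 4 → ℝ :=
  fun x μ ν =>
    let A := -(p14 * Real.exp (x 2) * Real.sin (x 3))
    let B := p14 * Real.exp (x 2) * Real.cos (x 3)
    let C := -(p14 * Real.exp (x 2) * Real.cos (x 3))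
    let D := -(p14 * Real.exp (x 2) * Real.sin (x 3))
    !![0, 0, A, B;
       0, 0, C, D;
       -A, -C, 0, 0;
       -B, -D, 0, 0] μ ν

/-- The Poisson bivector `P'` on the group `A_{4,12}`, with
`α = a54 x3 - a64 x4` and `β = a64 x3 + a54 x4`. -/
noncomputable def P412' (a54 a64 : ℝ) : (Fin 4 → ℝ) → Fin 4 → Fin 4 → ℝ :=
  fun x μ ν =>
    let α := a54 * x 2 - a64 * x 3
    let β := a64 * x 2 + a54 * x 3
    let A := Real.exp (x 2) * (-α * Real.cos (x 3) + β * Real.sin (x 3))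
    let B := -(Real.exp (x 2) * (β * Real.cos (x 3) + α * Real.sin (x 3)))
    let C := Real.exp (x 2) * (β * Real.cos (x 3) + α * Real.sin (x 3))
    let D := Real.exp (x 2) * (-α * Real.cos (x 3) + β * Real.sin (x 3))
    !![0, 0, A, B;
       0, 0, C, D;
       -A, -C, 0, 0;
       -B, -D, 0, 0] μ ν

open ContinuousLinearMap in
theorem A412_bi_involution (p14 a54 a64 : ℝ) (hne : p14 ≠ 0) :
    let H1 : (Fin 4 → ℝ) → ℝ := fun x => (-2 * a64 * x 2 - 2 * a54 * x 3) / p14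
    let H2 : (Fin 4 → ℝ) → ℝ := fun x =>
      ((a64 ^ 2 - a54 ^ 2) * (x 2) ^ 2 + 4 * a54 * a64 * x 2 * x 3
        + (a54 ^ 2 - a64 ^ 2) * (x 3) ^ 2) / p14 ^ 2
    (∀ x, pbrk (P412 p14) H1 H2 x = 0) ∧
    (∀ x, pbrk (P412' a54 a64) H1 H2 x = 0) := by
  intro H1 H2
  have key1 : ∀ (μ : Fin 4), μ = 0 ∨ μ = 1 → ∀ x, pd μ H1 x = 0 := by
    intro μ hμ x
    have h2 := (ContinuousLinearMap.proj (R := ℝ) (φ := fun _ : Fin 4 => ℝ) 2).hasFDerivAt (x := x)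
    have h3 := (ContinuousLinearMap.proj (R := ℝ) (φ := fun _ : Fin 4 => ℝ) 3).hasFDerivAt (x := x)
    have h := (((h2.const_mul (-2*a64)).sub (h3.const_mul (2*a54))).mul_const p14⁻¹)
    have heq : H1
        = (fun x : Fin 4 → ℝ => (-2 * a64 * (proj 2 : (Fin 4 → ℝ) →L[ℝ] ℝ) x
            - 2 * a54 * (proj 3 : (Fin 4 → ℝ) →L[ℝ] ℝ) x) * p14⁻¹) := by
      funext y; simp [H1, ContinuousLinearMap.proj_apply, div_eq_mul_inv]
    simp only [Pi.sub_apply, Pi.add_apply, Pi.mul_apply] at h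
    unfold pd
    rw [heq, h.fderiv]
    rcases hμ with rfl | rfl <;>
      simp [ContinuousLinearMap.proj_apply, Pi.single_eq_of_ne]
  have key2 : ∀ (μ : Fin 4), μ = 0 ∨ μ = 1 → ∀ x, pd μ H2 x = 0 := by
    intro μ hμ x
    have h2 := (ContinuousLinearMap.proj (R := ℝ) (φ := fun _ : Fin 4 => ℝ) 2).hasFDerivAt (x := x)
    have h3 := (ContinuousLinearMap.proj (R := ℝ) (φ := fun _ : Fin 4 => ℝ) 3).hasFDerivAt (x := x)
    have h := (((((h2.mul h2).const_mul (a64^2 - a54^2)).add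
        ((h2.mul h3).const_mul (4*a54*a64))).add
        ((h3.mul h3).const_mul (a54^2 - a64^2))).mul_const (p14^2)⁻¹)
    have heq : H2
        = (fun x : Fin 4 → ℝ =>
            ((a64^2 - a54^2) * ((proj 2 : (Fin 4 → ℝ) →L[ℝ] ℝ) x * (proj 2 : (Fin 4 → ℝ) →L[ℝ] ℝ) x)
              + 4*a54*a64 * ((proj 2 : (Fin 4 → ℝ) →L[ℝ] ℝ) x * (proj 3 : (Fin 4 → ℝ) →L[ℝ] ℝ) x)
              + (a54^2 - a64^2) * ((proj 3 : (Fin 4 → ℝ) →L[ℝ] ℝ) x * (proj 3 : (Fin 4 → ℝ) →L[ℝ] ℝ) x))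
            * (p14^2)⁻¹) := by
      funext y; simp only [H2, ContinuousLinearMap.proj_apply, div_eq_mul_inv]; ring
    simp only [Pi.sub_apply, Pi.add_apply, Pi.mul_apply] at h
    unfold pd
    rw [heq, h.fderiv]
    rcases hμ with rfl | rfl <;>
      simp [ContinuousLinearMap.proj_apply, Pi.single_eq_of_ne]
  constructor <;> intro x <;>
  · unfold pbrk
    rw [Fin.sum_univ_four]
    rw [Fin.sum_univ_four, Fin.sum_univ_four, Fin.sum_univ_four, Fin.sum_univ_four]
    simp [key1 0 (Or.inl rfl), key1 1 (Or.inr rfl), key2 0 (Or.inl rfl),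
      key2 1 (Or.inr rfl), P412, P412', Matrix.vecHead, Matrix.vecTail]
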